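/- Let (X,d) be a metric space, ℓ, n ≥ 1, p ≥ 1 a real number, a : Fin ℓ → Fin n → X a colored point configuration, and c : Fin n → X an aligned fair clustering of p-cost OPT := (Σ_{j : Fin ℓ} Σ_{t : Fin n} d(a j t, c t)^p)^{1/p}. Then there exists a color i : Fin ℓ such that (Σ_{j : Fin ℓ} EMD_p(a i, a j)^p)^{1/p} ≤ 2·OPT. -/

import Mathlib

/-- The `p`-cost Earth Mover's distance between two `n`-tuples of points of a metric
space: the minimum over permutations `π` of `Fin n` of
`(∑ t, dist (x t) (y (π t)) ^ p) ^ (1/p)`. -/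
noncomputable def EMDp {X : Type*} [MetricSpace X] {n : ℕ} (p : ℝ) (x y : Fin n → X) : ℝ :=
  Finset.univ.inf' ⟨1, Finset.mem_univ 1⟩
    (fun π : Equiv.Perm (Fin n) => (∑ t, dist (x t) (y (π t)) ^ p) ^ (1 / p))

lemma EMDp_nonneg {X : Type*} [MetricSpace X] {n : ℕ} (p : ℝ) (x y : Fin n → X) :
    0 ≤ EMDp p x y := by
  rw [EMDp]; apply Finset.le_inf'
  intro π _
  exact Real.rpow_nonneg (Finset.sum_nonneg fun t _ => Real.rpow_nonneg dist_nonneg p) _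

/-- Given a balanced colored point configuration `a` and an aligned fair clustering
with center map `c` of `p`-cost `OPT`, there is a color `i` whose aggregated
Earth Mover's distance to all colors is at most `2 · OPT`. -/
theorem exists_color_emd_le_two_opt {X : Type*} [MetricSpace X] {ℓ n : ℕ}
    (hℓ : 1 ≤ ℓ) (hn : 1 ≤ n) {p : ℝ} (hp : 1 ≤ p)
    (a : Fin ℓ → Fin n → X) (c : Fin n → X) :
    ∃ i : Fin ℓ,
      (∑ j, EMDp p (a i) (a j) ^ p) ^ (1 / p) ≤
        2 * (∑ j, ∑ t, dist (a j t) (c t) ^ p) ^ (1 / p) := by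
  have hp0 : 0 < p := lt_of_lt_of_le one_pos hp
  set D : Fin ℓ → ℝ := fun j => ∑ t, dist (a j t) (c t) ^ p with hD
  have hDnn : ∀ j, 0 ≤ D j := fun j =>
    Finset.sum_nonneg fun t _ => Real.rpow_nonneg dist_nonneg p
  obtain ⟨i, -, hi⟩ := Finset.exists_min_image Finset.univ D
    ⟨⟨0, hℓ⟩, Finset.mem_univ _⟩
  refine ⟨i, ?_⟩
  -- Step 1: EMDp ^ p ≤ pointwise sum of dist^p
  have step1 : ∀ j, EMDp p (a i) (a j) ^ p ≤ ∑ t, dist (a i t) (a j t) ^ p := by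
    intro j
    have hle : EMDp p (a i) (a j) ≤ (∑ t, dist (a i t) (a j t) ^ p) ^ (1 / p) := by
      have := Finset.inf'_le
        (fun π : Equiv.Perm (Fin n) => (∑ t, dist (a i t) (a j t) ^ p) ^ (1 / p))
        (Finset.mem_univ (1 : Equiv.Perm (Fin n)))
      simpa [EMDp] using Finset.inf'_le
        (fun π : Equiv.Perm (Fin n) => (∑ t, dist (a i t) ((a j) (π t)) ^ p) ^ (1 / p))
        (Finset.mem_univ (1 : Equiv.Perm (Fin n)))
    have hsnn : (0 : ℝ) ≤ ∑ t, dist (a i t) (a j t) ^ p :=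
      Finset.sum_nonneg fun t _ => Real.rpow_nonneg dist_nonneg p
    have hEnn : 0 ≤ EMDp p (a i) (a j) := EMDp_nonneg p _ _
    calc EMDp p (a i) (a j) ^ p
        ≤ ((∑ t, dist (a i t) (a j t) ^ p) ^ (1 / p)) ^ p :=
          Real.rpow_le_rpow hEnn hle hp0.le
      _ = ∑ t, dist (a i t) (a j t) ^ p := by
          rw [← Real.rpow_mul hsnn, one_div, inv_mul_cancel₀ hp0.ne', Real.rpow_one]
  -- Step 2: sum over j and apply Minkowski over Fin ℓ × Fin n
  have key : (∑ j, ∑ t, dist (a i t) (a j t) ^ p) ^ (1 / p) ≤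
      2 * (∑ j, D j) ^ (1 / p) := by
    have hmink := Real.Lp_add_le_of_nonneg (s := (Finset.univ : Finset (Fin ℓ × Fin n)))
      (f := fun q => dist (a i q.2) (c q.2)) (g := fun q => dist (c q.2) (a q.1 q.2)) hp
      (fun q _ => dist_nonneg) (fun q _ => dist_nonneg)
    have hsum1 : ∑ q : Fin ℓ × Fin n, dist (a i q.2) (c q.2) ^ p = (ℓ : ℝ) * D i := by
      rw [Fintype.sum_prod_type]
      simp [hD, Finset.sum_const, nsmul_eq_mul]
    have hsum2 : ∑ q : Fin ℓ × Fin n, dist (c q.2) (a q.1 q.2) ^ p = ∑ j, D j := by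
      rw [Fintype.sum_prod_type]
      simp [hD, dist_comm]
    have hmono : (∑ j, ∑ t, dist (a i t) (a j t) ^ p) ^ (1 / p) ≤
        (∑ q : Fin ℓ × Fin n,
          (dist (a i q.2) (c q.2) + dist (c q.2) (a q.1 q.2)) ^ p) ^ (1 / p) := by
      apply Real.rpow_le_rpow
      · exact Finset.sum_nonneg fun j _ =>
          Finset.sum_nonneg fun t _ => Real.rpow_nonneg dist_nonneg p
      · rw [Fintype.sum_prod_type]
        apply Finset.sum_le_sum
        intro j _
        apply Finset.sum_le_sum
        intro t _
        exact Real.rpow_le_rpow dist_nonneg (dist_triangle _ _ _) hp0.le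
      · positivity
    have hfirst : ((ℓ : ℝ) * D i) ^ (1 / p) ≤ (∑ j, D j) ^ (1 / p) := by
      apply Real.rpow_le_rpow (by positivity) ?_ (by positivity)
      calc (ℓ : ℝ) * D i = ∑ _j : Fin ℓ, D i := by
            simp [Finset.sum_const, nsmul_eq_mul]
        _ ≤ ∑ j, D j := Finset.sum_le_sum fun j _ => hi j (Finset.mem_univ j)
    calc (∑ j, ∑ t, dist (a i t) (a j t) ^ p) ^ (1 / p)
        ≤ (∑ q : Fin ℓ × Fin n,
            (dist (a i q.2) (c q.2) + dist (c q.2) (a q.1 q.2)) ^ p) ^ (1 / p) := hmono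
      _ ≤ (∑ q : Fin ℓ × Fin n, dist (a i q.2) (c q.2) ^ p) ^ (1 / p) +
            (∑ q : Fin ℓ × Fin n, dist (c q.2) (a q.1 q.2) ^ p) ^ (1 / p) := hmink
      _ = ((ℓ : ℝ) * D i) ^ (1 / p) + (∑ j, D j) ^ (1 / p) := by rw [hsum1, hsum2]
      _ ≤ (∑ j, D j) ^ (1 / p) + (∑ j, D j) ^ (1 / p) := by
            exact add_le_add hfirst le_rfl
      _ = 2 * (∑ j, D j) ^ (1 / p) := by ring
  calc (∑ j, EMDp p (a i) (a j) ^ p) ^ (1 / p)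
      ≤ (∑ j, ∑ t, dist (a i t) (a j t) ^ p) ^ (1 / p) := by
        apply Real.rpow_le_rpow ?_ (Finset.sum_le_sum fun j _ => step1 j) (by positivity)
        exact Finset.sum_nonneg fun j _ => Real.rpow_nonneg (EMDp_nonneg p _ _) p
    _ ≤ 2 * (∑ j, D j) ^ (1 / p) := key
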